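/- Let G be a permutation graph with orders <_t, <_b. Let i be a vertex and x, y be vertices with x <_t y, y <_b x (a crossing pair), i <_t y, i <_b x, and i adjacent to both x and y. Then x <_t i <_t y and y <_b i <_b x, and the neighborhood of i within V_{ii} ∪ {x,y} is exactly {x,y}, where V_{ii} = {h : h <_t i and h <_b i} ∪ {i}; consequently if x, y, i ∉ S then no subset of V_{ii} ∪ {x,y} containing i induces an S-cycle. -/

import Mathlib

/-- The permutation graph determined by a top order `tlt` and a bottom order
`blt`. -/
def permGraph {V : Type*} (tlt blt : V → V → Prop) : SimpleGraph V where
  Adj u v := u ≠ v ∧ ((tlt u v ∧ blt v u) ∨ (tlt v u ∧ blt u v))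
  symm := ⟨fun _ _ h => ⟨h.1.symm, h.2.symm⟩⟩
  loopless := ⟨fun _ h => h.1 rfl⟩

/-- A walk is chordless. -/
def Chordless {V : Type*} (G : SimpleGraph V) {v : V} (c : G.Walk v v) : Prop :=
  ∀ u w, u ∈ c.support → w ∈ c.support → G.Adj u w → s(u, w) ∈ c.edges

open SimpleGraph Walk

private lemma stmt17_core_aux {V : Type*} {G : SimpleGraph V} {i x y : V}
    (hxi : x ≠ i) (hyi : y ≠ i) (hxy : x ≠ y)
    (h : G.Adj i x) (p : G.Walk x i)
    (hcyc : (Walk.cons h p).IsCycle)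
    (hexy : s(x, y) ∈ (Walk.cons h p).edges)
    (heiy : s(i, y) ∈ (Walk.cons h p).edges) :
    ∀ u ∈ (Walk.cons h p).support, u = i ∨ u = x ∨ u = y := by
  have hnd : (Walk.cons h p).support.tail.Nodup := hcyc.support_nodup
  rw [Walk.support_cons, List.tail_cons] at hnd
  cases p with
  | nil => exact absurd rfl hxi
  | cons hxw q =>
    rename_i w
    have hwy : w = y := by
      simp only [Walk.edges_cons, List.mem_cons] at hexy
      rcases hexy with h1 | h1 | h1
      · exfalso
        rw [Sym2.eq_iff] at h1
        rcases h1 with ⟨h2, -⟩ | ⟨-, h2⟩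
        · exact hxi h2
        · exact hyi h2
      · rw [Sym2.eq_iff] at h1
        rcases h1 with ⟨-, h2⟩ | ⟨-, h3⟩
        · exact h2.symm
        · exact absurd h3.symm hxy
      · exfalso
        have hxq : x ∈ q.support := q.fst_mem_support_of_mem_edges h1
        simp only [Walk.support_cons, List.nodup_cons] at hnd
        exact hnd.1 hxq
    subst hwy
    cases q with
    | nil => exact absurd rfl hyi
    | cons hyu r =>
      rename_i u
      simp only [Walk.support_cons, List.nodup_cons] at hnd
      have hui : u = i := by
        simp only [Walk.edges_cons, List.mem_cons] at heiy
        rcases heiy with h1 | h1 | h1 | h1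
        · exfalso
          rw [Sym2.eq_iff] at h1
          rcases h1 with ⟨-, h2⟩ | ⟨h2, -⟩
          · exact hxy h2.symm
          · exact hxi h2.symm
        · exfalso
          rw [Sym2.eq_iff] at h1
          rcases h1 with ⟨h2, -⟩ | ⟨h2, -⟩
          · exact hxi h2.symm
          · exact hyi h2.symm
        · rw [Sym2.eq_iff] at h1
          rcases h1 with ⟨h2, -⟩ | ⟨h2, -⟩
          · exact absurd h2.symm hyi
          · exact h2.symm
        · exfalso
          exact hnd.2.1 (r.snd_mem_support_of_mem_edges h1)
      subst hui
      cases r with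
      | nil =>
        intro z hz
        simp only [Walk.support_cons, Walk.support_nil, List.mem_cons,
          List.mem_singleton] at hz
        tauto
      | cons hiv r' =>
        exfalso
        simp only [Walk.support_cons, List.nodup_cons] at hnd
        exact hnd.2.2.1 r'.end_mem_support

private lemma stmt17_mem_support_closed {V : Type*} {G : SimpleGraph V} {v w : V}
    {c : G.Walk v v} (h : c ≠ Walk.nil) : w ∈ c.support ↔ w ∈ c.support.tail := by
  cases c with
  | nil => exact absurd rfl h
  | cons hb q =>
    simp only [Walk.support_cons, List.tail_cons, List.mem_cons]
    constructor
    · rintro (rfl | hw)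
      · exact q.end_mem_support
      · exact hw
    · exact Or.inr

private lemma stmt17_core {V : Type*} {G : SimpleGraph V} {i x y : V}
    (hxy : G.Adj x y) (hix : G.Adj i x) (hiy : G.Adj i y)
    (c : G.Walk i i) (hc : c.IsCycle)
    (hch : ∀ u w, u ∈ c.support → w ∈ c.support → G.Adj u w → s(u, w) ∈ c.edges)
    (hnb : ∀ u ∈ c.support, G.Adj i u → u = x ∨ u = y) :
    ∀ u ∈ c.support, u = i ∨ u = x ∨ u = y := by
  cases c with
  | nil => exact absurd rfl hc.ne_nil
  | cons hb p =>
    rename_i b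
    obtain ⟨z, hz, p', hrev⟩ :
        ∃ (z : V) (hz : G.Adj i z) (p' : G.Walk z i),
          (Walk.cons hb p).reverse = Walk.cons hz p' := by
      generalize hq : (Walk.cons hb p).reverse = q
      cases q with
      | nil =>
        exfalso
        have := congrArg Walk.length hq
        simp at this
      | cons hz p' => exact ⟨_, hz, p', rfl⟩
    have hbs : b ∈ (Walk.cons hb p).support := by
      simp [p.start_mem_support]
    have hzs : z ∈ (Walk.cons hb p).support := by
      have : z ∈ (Walk.cons hb p).reverse.support := by
        rw [hrev]; simp [p'.start_mem_support]
      rwa [Walk.support_reverse, List.mem_reverse] at this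
    have hbxy := hnb b hbs hb
    have hzxy := hnb z hzs hz
    have hbz : b ≠ z := by
      rintro rfl
      have hedges : (Walk.cons hb p).edges.reverse = s(i, b) :: p'.edges := by
        rw [← Walk.edges_reverse, hrev, Walk.edges_cons]
      have hne : p'.edges ≠ [] := by
        intro hnil
        cases p' with
        | nil => exact hz.ne rfl
        | cons _ _ => simp at hnil
      obtain ⟨a, A, hA⟩ := List.exists_cons_of_ne_nil hne
      have : (Walk.cons hb p).edges = (s(i, b) :: p'.edges).reverse := by
        rw [← hedges, List.reverse_reverse]
      rw [Walk.edges_cons, hA] at this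
      simp only [List.reverse_cons] at this
      obtain ⟨e, E, hE⟩ := List.exists_cons_of_ne_nil
        (show A.reverse ++ [a] ≠ [] by simp)
      rw [hE, List.cons_append] at this
      have hmem : s(i, b) ∈ p.edges := by
        have h2 : p.edges = E ++ [s(i, b)] := (List.cons_eq_cons.mp this).2
        rw [h2]
        simp
      have hndE : (Walk.cons hb p).edges.Nodup := hc.isTrail.edges_nodup
      rw [Walk.edges_cons, List.nodup_cons] at hndE
      exact hndE.1 hmem
    have heiz : s(i, z) ∈ (Walk.cons hb p).edges := by
      have : s(i, z) ∈ (Walk.cons hb p).reverse.edges := by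
        rw [hrev]; simp
      rwa [Walk.edges_reverse, List.mem_reverse] at this
    rcases hbxy with rfl | rfl
    · -- b = x, so z = y
      have hzy : z = y := hzxy.resolve_left (fun h => hbz h.symm)
      rw [hzy] at hzs heiz
      have hexy : s(b, y) ∈ (Walk.cons hb p).edges :=
        hch b y hbs hzs hxy
      exact stmt17_core_aux hix.ne' hiy.ne' hxy.ne hb p hc hexy heiz
    · -- b = y, so z = x
      have hzx : z = x := hzxy.resolve_right (fun h => hbz h.symm)
      rw [hzx] at hzs heiz
      have heyx : s(b, x) ∈ (Walk.cons hb p).edges := by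
        have := hch x b hzs hbs hxy
        rwa [Sym2.eq_swap] at this
      have h1 := stmt17_core_aux hiy.ne' hix.ne' hxy.symm.ne hb p hc heyx heiz
      intro u hu
      rcases h1 u hu with h | h | h
      · exact Or.inl h
      · exact Or.inr (Or.inr h)
      · exact Or.inr (Or.inl h)

theorem stmt_17 {V : Type*} (tlt blt : V → V → Prop)
    [IsStrictTotalOrder V tlt] [IsStrictTotalOrder V blt]
    (S : Set V) (i x y : V)
    (hxy_t : tlt x y) (hxy_b : blt y x)
    (hi_t : tlt i y) (hi_b : blt i x)
    (hix : (permGraph tlt blt).Adj i x) (hiy : (permGraph tlt blt).Adj i y) :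
    (tlt x i ∧ tlt i y ∧ blt y i ∧ blt i x) ∧
      (∀ v ∈ ({h : V | tlt h i ∧ blt h i} ∪ {i}) ∪ {x, y},
        ((permGraph tlt blt).Adj i v ↔ v = x ∨ v = y)) ∧
      (x ∉ S → y ∉ S → i ∉ S →
        ∀ (v : V) (c : (permGraph tlt blt).Walk v v), c.IsCycle →
          Chordless (permGraph tlt blt) c →
          (∀ u ∈ c.support, u ∈ ({h : V | tlt h i ∧ blt h i} ∪ {i}) ∪ {x, y}) →
          i ∈ c.support → ∀ u ∈ c.support, u ∉ S) := by
  obtain ⟨hnex, hcx⟩ := hix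
  obtain ⟨hney, hcy⟩ := hiy
  have htxi : tlt x i ∧ blt i x := by
    rcases hcx with ⟨h1, h2⟩ | h
    · exact absurd (trans_of blt hi_b h2) (irrefl_of blt i)
    · exact h
  have htiy : tlt i y ∧ blt y i := by
    rcases hcy with h | ⟨h1, h2⟩
    · exact h
    · exact absurd (trans_of tlt hi_t h1) (irrefl_of tlt i)
  -- neighbourhood characterisation
  have hN : ∀ v ∈ ({h : V | tlt h i ∧ blt h i} ∪ {i}) ∪ {x, y},
      ((permGraph tlt blt).Adj i v ↔ v = x ∨ v = y) := by
    intro v hv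
    constructor
    · intro hadj
      simp only [Set.mem_union, Set.mem_setOf_eq, Set.mem_singleton_iff,
        Set.mem_insert_iff] at hv
      rcases hv with (⟨ht, hb⟩ | rfl) | hv
      · exfalso
        obtain ⟨-, hc⟩ := hadj
        rcases hc with ⟨h1, h2⟩ | ⟨h1, h2⟩
        · exact absurd (trans_of tlt h1 ht) (irrefl_of tlt i)
        · exact absurd (trans_of blt h2 hb) (irrefl_of blt i)
      · exact absurd rfl hadj.1
      · exact hv
    · rintro (rfl | rfl)
      · exact ⟨hnex, hcx⟩
      · exact ⟨hney, hcy⟩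
  refine ⟨⟨htxi.1, hi_t, htiy.2, htxi.2⟩, hN, ?_⟩
  intro hxS hyS hiS v c hc hch hsub hi u hu
  classical
  have hxyAdj : (permGraph tlt blt).Adj x y :=
    ⟨fun h => absurd hxy_t (h ▸ irrefl_of tlt y), Or.inl ⟨hxy_t, hxy_b⟩⟩
  have hd : (c.rotate i hi).IsCycle := hc.rotate hi
  have hmem : ∀ w, w ∈ (c.rotate i hi).support ↔ w ∈ c.support := by
    intro w
    rw [stmt17_mem_support_closed hd.ne_nil, stmt17_mem_support_closed hc.ne_nil]
    exact (SimpleGraph.Walk.support_rotate c i hi).mem_iff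
  have hedge : ∀ e, e ∈ (c.rotate i hi).edges ↔ e ∈ c.edges :=
    fun e => (SimpleGraph.Walk.rotate_edges c i hi).mem_iff
  have hch' : ∀ a b, a ∈ (c.rotate i hi).support → b ∈ (c.rotate i hi).support →
      (permGraph tlt blt).Adj a b → s(a, b) ∈ (c.rotate i hi).edges := by
    intro a b ha hb hab
    exact (hedge _).2 (hch a b ((hmem a).1 ha) ((hmem b).1 hb) hab)
  have hnb : ∀ w ∈ (c.rotate i hi).support, (permGraph tlt blt).Adj i w → w = x ∨ w = y := by
    intro w hw hadj
    exact (hN w (hsub w ((hmem w).1 hw))).1 hadj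
  have hkey := stmt17_core hxyAdj (⟨hnex, hcx⟩ : (permGraph tlt blt).Adj i x) (⟨hney, hcy⟩ : (permGraph tlt blt).Adj i y)
    (c.rotate i hi) hd hch' hnb
  rcases hkey u ((hmem u).2 hu) with rfl | rfl | rfl
  · exact hiS
  · exact hxS
  · exact hyS
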